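/- (Realizability of the region) For any real numbers m, h, s satisfying s ≤ 4, s − m − 2 ≥ 0, 3m + 2 − s ≥ 0, h − s/2 + 3m/8 + 1 ≥ 0, and h < 1, there exist a finite set Λ and probability distributions {p(·|i)}_{i=1}^{4} on Λ such that M = m, H = h, and S_opt = s, where M = max_{i,j} Σ_λ |p(λ|i) − p(λ|j)|, H = 1 − (1/4)max_λ Σ_i p(λ|i), and S_opt = 4 − 2·Σ_λ min_i p(λ|i). -/

import Mathlib

/-- Measurement dependence `M = max_{i,j} Σ_λ |p(λ|i) − p(λ|j)|`. -/
noncomputable def measDep {Λ : Type*} [Fintype Λ] (p : Λ → Fin 4 → ℝ) : ℝ :=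
  (Finset.univ : Finset (Fin 4 × Fin 4)).sup' ⟨(0,0), Finset.mem_univ _⟩
    (fun ij => ∑ l, |p l ij.1 - p l ij.2|)

/-- `H̃ = max_λ Σ_i p(λ|i)`. -/
noncomputable def hidW {Λ : Type*} [Fintype Λ] [Nonempty Λ] (p : Λ → Fin 4 → ℝ) : ℝ :=
  (Finset.univ : Finset Λ).sup' Finset.univ_nonempty (fun l => ∑ i, p l i)

/-- Hiddenness `H = 1 − (1/4)·max_λ Σ_i p(λ|i)`. -/
noncomputable def hiddenness {Λ : Type*} [Fintype Λ] [Nonempty Λ] (p : Λ → Fin 4 → ℝ) : ℝ :=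
  1 - (1/4) * hidW p

/-- `K = Σ_λ min_i p(λ|i)`. -/
noncomputable def kVal {Λ : Type*} [Fintype Λ] (p : Λ → Fin 4 → ℝ) : ℝ :=
  ∑ l, (Finset.univ : Finset (Fin 4)).inf' ⟨0, Finset.mem_univ _⟩ (p l)

/-- Optimal CHSH value `S_opt = 4 − 2K`. -/
noncomputable def sOpt {Λ : Type*} [Fintype Λ] (p : Λ → Fin 4 → ℝ) : ℝ :=
  4 - 2 * kVal p

lemma inf4_eq (f : Fin 4 → ℝ) (c : ℝ) (h0 : c ≤ f 0) (h1 : c ≤ f 1) (h2 : c ≤ f 2)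
    (h3 : c ≤ f 3) (he : ∃ i, f i = c) :
    (Finset.univ : Finset (Fin 4)).inf' ⟨0, Finset.mem_univ _⟩ f = c := by
  apply le_antisymm
  · obtain ⟨i, hi⟩ := he
    exact hi ▸ Finset.inf'_le _ (Finset.mem_univ i)
  · apply Finset.le_inf'
    intro i _
    fin_cases i <;> assumption

lemma sum9 (f : Fin 9 → ℝ) :
    ∑ t, f t = f 0 + (f 1 + (f 2 + (f 3 + (f 4 + (f 5 + (f 6 + (f 7 + f 8))))))) := by
  simp [Fin.sum_univ_succ]

lemma main_aux (K x u η w v β γ : ℝ) (N : ℕ)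
    (hx : 0 ≤ x) (hu : 0 ≤ u) (hw0 : 0 ≤ w) (hwK : w ≤ K)
    (hv : 0 ≤ v) (hβ0 : 0 ≤ β) (hβu : β ≤ u) (hγ0 : 0 ≤ γ) (hγx : γ ≤ x)
    (hvβγ : v = β + γ) (hmass : K + 3*x + u = 1)
    (hη : 0 < η) (hstar : 4*w + 3*v = η)
    (hN : 4 ≤ (N : ℝ) * η) :
    ∃ (Λ : Type) (_ : Fintype Λ) (_ : Nonempty Λ) (p : Λ → Fin 4 → ℝ),
      (∀ l i, 0 ≤ p l i) ∧ (∀ i, ∑ l, p l i = 1) ∧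
      measDep p = 2*x + 2*u ∧ hiddenness p = 1 - η/4 ∧ sOpt p = 4 - 2*K := by
  have hNpos : 0 < (N : ℝ) := by
    rcases Nat.eq_zero_or_pos N with h | h
    · exfalso; rw [h] at hN; push_cast at hN; linarith
    · exact_mod_cast h
  have hNne : (N : ℝ) ≠ 0 := ne_of_gt hNpos
  set q : Fin 9 → Fin 4 → ℝ :=
    ![![K-w, K-w, K-w, K-w],
      ![0, x, x, x],
      ![x, 0, x, x],
      ![x, x, 0, x],
      ![x-γ, x-γ, x-γ, 0],
      ![u-β, 0, 0, 0],
      ![0, u-β, 0, 0],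
      ![0, 0, u-β, 0],
      ![0, 0, 0, u]] with hq
  set star : Fin 4 → ℝ := ![w+v, w+v, w+v, w] with hstardef
  have e0 : q 0 = ![K-w, K-w, K-w, K-w] := rfl
  have e1 : q 1 = ![0, x, x, x] := rfl
  have e2 : q 2 = ![x, 0, x, x] := rfl
  have e3 : q 3 = ![x, x, 0, x] := rfl
  have e4 : q 4 = ![x-γ, x-γ, x-γ, 0] := rfl
  have e5 : q 5 = ![u-β, 0, 0, 0] := rfl
  have e6 : q 6 = ![0, u-β, 0, 0] := rfl
  have e7 : q 7 = ![0, 0, u-β, 0] := rfl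
  have e8 : q 8 = ![0, 0, 0, u] := rfl
  set p : Option (Fin N × Fin 9) → Fin 4 → ℝ :=
    fun l i => l.elim (star i) (fun kj => q kj.2 i / N) with hp
  have hpnone : p none = star := rfl
  have hpsome : ∀ (k : Fin N) (t : Fin 9), p (some (k, t)) = fun i => q t i / N := fun _ _ => rfl
  have hav : |v| = v := abs_of_nonneg hv
  have hax : |x| = x := abs_of_nonneg hx
  have hau : |u| = u := abs_of_nonneg hu
  have hag : |γ| = γ := abs_of_nonneg hγ0
  have haub : |u - β| = u - β := abs_of_nonneg (by linarith)
  have haxg : |x - γ| = x - γ := abs_of_nonneg (by linarith)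
  have hsumk : ∀ c : ℝ, ∑ _k : Fin N, c = N * c := by
    intro c; rw [Finset.sum_const, Finset.card_univ, Fintype.card_fin, nsmul_eq_mul]
  have hscale : ∀ c : ℝ, ∑ _k : Fin N, c / N = c := by
    intro c; rw [hsumk, mul_div_cancel₀ _ hNne]
  have hdist : ∀ i j : Fin 4, ∑ l, |p l i - p l j|
      = |star i - star j| + ∑ t, |q t i - q t j| := by
    intro i j
    rw [hp, Fintype.sum_option, Fintype.sum_prod_type]
    simp only [Option.elim_none, Option.elim_some]
    congr 1
    have habs : ∀ t : Fin 9, |q t i / N - q t j / N| = |q t i - q t j| / N := by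
      intro t
      rw [div_sub_div_same, abs_div, abs_of_pos hNpos]
    calc ∑ k : Fin N, ∑ t : Fin 9, |q t i / ↑N - q t j / ↑N|
        = ∑ _k : Fin N, (∑ t : Fin 9, |q t i - q t j|) / N := by
          refine Finset.sum_congr rfl fun k _ => ?_
          rw [Finset.sum_div]
          exact Finset.sum_congr rfl fun t _ => habs t
      _ = ∑ t : Fin 9, |q t i - q t j| := hscale _
  have hcolsum : ∀ t : Fin 9, ∑ i, q t i ≤ 4 := by
    intro t
    rw [Fin.sum_univ_four]
    fin_cases t <;> simp [e0, e1, e2, e3, e4, e5, e6, e7, e8] <;> linarith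
  have hcolN : ∀ t : Fin 9, ∑ i, q t i / N ≤ η := by
    intro t
    rw [← Finset.sum_div, div_le_iff₀ hNpos]
    calc ∑ i, q t i ≤ 4 := hcolsum t
      _ ≤ η * N := by rw [mul_comm]; exact hN
  refine ⟨Option (Fin N × Fin 9), inferInstance, inferInstance, p, ?_, ?_, ?_, ?_, ?_⟩
  · -- nonneg
    rintro (_ | ⟨k, t⟩) i
    · show 0 ≤ star i
      fin_cases i <;> simp [hstardef] <;> linarith
    · show 0 ≤ q t i / N
      apply div_nonneg _ (le_of_lt hNpos)
      fin_cases t <;> fin_cases i <;>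
        first
          | exact le_refl 0
          | exact hx
          | exact hu
          | exact sub_nonneg.mpr hγx
          | exact sub_nonneg.mpr hβu
          | exact sub_nonneg.mpr hwK
  · -- masses
    intro i
    rw [hp, Fintype.sum_option, Fintype.sum_prod_type]
    simp only [Option.elim_none, Option.elim_some]
    have hrepl : ∑ k : Fin N, ∑ t : Fin 9, q t i / N = ∑ t : Fin 9, q t i := by
      calc ∑ _k : Fin N, ∑ t : Fin 9, q t i / N
          = ∑ _k : Fin N, (∑ t : Fin 9, q t i) / N := by
            refine Finset.sum_congr rfl fun k _ => ?_
            rw [Finset.sum_div]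
        _ = ∑ t : Fin 9, q t i := hscale _
    rw [hrepl, sum9]
    fin_cases i <;> simp [e0, e1, e2, e3, e4, e5, e6, e7, e8, hstardef] <;> linarith
  · -- measDep
    unfold measDep
    apply le_antisymm
    · apply Finset.sup'_le
      rintro ⟨i, j⟩ -
      show ∑ l, |p l i - p l j| ≤ 2*x + 2*u
      rw [hdist i j, sum9]
      fin_cases i <;> fin_cases j <;>
        (simp [e0, e1, e2, e3, e4, e5, e6, e7, e8, hstardef, hav, hax, hau, hag, haub, haxg,
          abs_sub_comm]; try linarith)
    · have h03 : ∑ l, |p l 0 - p l 3| = 2*x + 2*u := by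
        rw [hdist 0 3, sum9]
        simp [e0, e1, e2, e3, e4, e5, e6, e7, e8, hstardef, hav, hax, hau, hag, haub, haxg]
        linarith
      calc (2*x + 2*u : ℝ) = ∑ l, |p l 0 - p l 3| := h03.symm
        _ ≤ _ := Finset.le_sup' (f := fun ij : Fin 4 × Fin 4 => ∑ l, |p l ij.1 - p l ij.2|)
            (Finset.mem_univ ((0 : Fin 4), (3 : Fin 4)))
  · -- hiddenness
    have hstar4 : ∑ i, star i = η := by
      rw [Fin.sum_univ_four]
      simp [hstardef]
      linarith
    have hW : hidW p = η := by
      unfold hidW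
      apply le_antisymm
      · apply Finset.sup'_le
        rintro (_ | ⟨k, t⟩) -
        · show ∑ i, star i ≤ η
          rw [hstar4]
        · show ∑ i, q t i / N ≤ η
          exact hcolN t
      · calc η = ∑ i, p none i := hstar4.symm
          _ ≤ _ := Finset.le_sup' (fun l => ∑ i, p l i) (Finset.mem_univ none)
    unfold hiddenness
    rw [hW]; ring
  · -- sOpt
    have hk : kVal p = K := by
      unfold kVal
      rw [Fintype.sum_option, Fintype.sum_prod_type]
      have hnone : (Finset.univ : Finset (Fin 4)).inf' ⟨0, Finset.mem_univ _⟩ (p none) = w := by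
        rw [hpnone]
        refine inf4_eq _ _ ?_ ?_ ?_ ?_ ⟨3, by simp [hstardef]⟩ <;>
          simp [hstardef] <;> linarith
      have hsome : ∀ (k : Fin N) (t : Fin 9),
          (Finset.univ : Finset (Fin 4)).inf' ⟨0, Finset.mem_univ _⟩ (p (some (k, t)))
          = (if t = 0 then (K-w)/N else 0) := by
        intro k t
        rw [hpsome k t]
        fin_cases t
        · refine inf4_eq _ _ ?_ ?_ ?_ ?_ ⟨0, ?_⟩ <;> simp [e0]
        · refine inf4_eq _ _ ?_ ?_ ?_ ?_ ⟨0, ?_⟩ <;> simp [e1] <;>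
            exact div_nonneg (by linarith) hNpos.le
        · refine inf4_eq _ _ ?_ ?_ ?_ ?_ ⟨1, ?_⟩ <;> simp [e2] <;>
            exact div_nonneg (by linarith) hNpos.le
        · refine inf4_eq _ _ ?_ ?_ ?_ ?_ ⟨2, ?_⟩ <;> simp [e3] <;>
            exact div_nonneg (by linarith) hNpos.le
        · refine inf4_eq _ _ ?_ ?_ ?_ ?_ ⟨3, ?_⟩ <;> simp [e4] <;>
            exact div_nonneg (by linarith) hNpos.le
        · refine inf4_eq _ _ ?_ ?_ ?_ ?_ ⟨1, ?_⟩ <;> simp [e5] <;>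
            exact div_nonneg (by linarith) hNpos.le
        · refine inf4_eq _ _ ?_ ?_ ?_ ?_ ⟨0, ?_⟩ <;> simp [e6] <;>
            exact div_nonneg (by linarith) hNpos.le
        · refine inf4_eq _ _ ?_ ?_ ?_ ?_ ⟨0, ?_⟩ <;> simp [e7] <;>
            exact div_nonneg (by linarith) hNpos.le
        · refine inf4_eq _ _ ?_ ?_ ?_ ?_ ⟨0, ?_⟩ <;> simp [e8] <;>
            exact div_nonneg (by linarith) hNpos.le
      have hrepl : ∑ k : Fin N, ∑ t : Fin 9,
          (Finset.univ : Finset (Fin 4)).inf' ⟨0, Finset.mem_univ _⟩ (p (some (k, t)))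
          = K - w := by
        calc ∑ k : Fin N, ∑ t : Fin 9,
            (Finset.univ : Finset (Fin 4)).inf' ⟨0, Finset.mem_univ _⟩ (p (some (k, t)))
            = ∑ _k : Fin N, (K - w) / N := by
              refine Finset.sum_congr rfl fun k _ => ?_
              rw [Finset.sum_congr rfl fun t _ => hsome k t, Finset.sum_ite_eq'
                (Finset.univ : Finset (Fin 9)) 0 (fun _ => (K-w)/N)]
              simp
          _ = K - w := hscale _
      rw [hnone, hrepl]
      ring
    unfold sOpt
    rw [hk]

theorem stmt_16 (m h s : ℝ) (h1 : s ≤ 4) (h2 : 0 ≤ s - m - 2) (h3 : 0 ≤ 3 * m + 2 - s)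
    (h4 : 0 ≤ h - s / 2 + 3 * m / 8 + 1) (h5 : h < 1) :
    ∃ (Λ : Type) (_ : Fintype Λ) (_ : Nonempty Λ) (p : Λ → Fin 4 → ℝ),
      (∀ l i, 0 ≤ p l i) ∧ (∀ i, ∑ l, p l i = 1) ∧
      measDep p = m ∧ hiddenness p = h ∧ sOpt p = s := by
  set K : ℝ := 2 - s/2 with hK
  set x : ℝ := (s - 2 - m)/4 with hxdef
  set u : ℝ := (3*m - s + 2)/4 with hudef
  set η : ℝ := 4 - 4*h with hηdef
  set w : ℝ := min K (η/4) with hwdef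
  set v : ℝ := (η - 4*w)/3 with hvdef
  set β : ℝ := min v u with hβdef
  set γ : ℝ := v - β with hγdef
  have hs2 : 2 ≤ s := by linarith
  have hη : 0 < η := by rw [hηdef]; linarith
  have hK0 : 0 ≤ K := by rw [hK]; linarith
  have hx : 0 ≤ x := by rw [hxdef]; linarith
  have hu : 0 ≤ u := by rw [hudef]; linarith
  have hw0 : 0 ≤ w := le_min hK0 (by linarith)
  have hwK : w ≤ K := min_le_left _ _
  have hwη : w ≤ η/4 := min_le_right _ _
  have hv : 0 ≤ v := by rw [hvdef]; linarith
  have hηle : η ≤ 4*K + 3*x + 3*u := by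
    rw [hηdef, hK, hxdef, hudef]; linarith
  have hvxu : v ≤ x + u := by
    rcases le_total K (η/4) with hc | hc
    · have hwc : w = K := min_eq_left hc
      rw [hvdef, hwc]; linarith
    · have hwc : w = η/4 := min_eq_right hc
      rw [hvdef, hwc]; linarith
  have hβ0 : 0 ≤ β := le_min hv hu
  have hβu : β ≤ u := min_le_right _ _
  have hβv : β ≤ v := min_le_left _ _
  have hγ0 : 0 ≤ γ := by rw [hγdef]; linarith
  have hγx : γ ≤ x := by
    rcases le_total v u with hc | hc
    · have : β = v := min_eq_left hc
      rw [hγdef, this]; linarith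
    · have : β = u := min_eq_right hc
      rw [hγdef, this]; linarith
  have hvβγ : v = β + γ := by rw [hγdef]; ring
  have hmass : K + 3*x + u = 1 := by rw [hK, hxdef, hudef]; ring
  have hstarq : 4*w + 3*v = η := by rw [hvdef]; ring
  set N : ℕ := ⌈4/η⌉₊ with hNdef
  have hN : 4 ≤ (N : ℝ) * η := by
    have h1' : 4/η ≤ (N : ℝ) := Nat.le_ceil _
    calc (4 : ℝ) = (4/η) * η := by field_simp
      _ ≤ (N : ℝ) * η := mul_le_mul_of_nonneg_right h1' hη.le
  obtain ⟨Λ, inst1, inst2, p, hp1, hp2, hp3, hp4, hp5⟩ :=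
    main_aux K x u η w v β γ N hx hu hw0 hwK hv hβ0 hβu hγ0 hγx hvβγ hmass hη hstarq hN
  refine ⟨Λ, inst1, inst2, p, hp1, hp2, ?_, ?_, ?_⟩
  · rw [hp3, hxdef, hudef]; ring
  · rw [hp4, hηdef]; ring
  · rw [hp5, hK]; ring
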